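/- Let A, X be Hermitian n×n matrices with spectrum of A contained in D ⊂ ℝ, and let f, g be real functions on D satisfying (f(a) − f(b))(g(a) − g(b)) ≥ 0 for all a, b ∈ D. Then Tr[f(A) X g(A) X] ≤ Tr[f(A) g(A) X²]. -/
import Mathlib

open Matrix ComplexOrder in
theorem bourin_fujii_i {n : ℕ} (A X : Matrix (Fin n) (Fin n) ℂ)
    (hA : A.IsHermitian) (hX : X.IsHermitian) (D : Set ℝ) (f g : ℝ → ℝ)
    (hspec : ∀ i, hA.eigenvalues i ∈ D)
    (hfg : ∀ a ∈ D, ∀ b ∈ D, 0 ≤ (f a - f b) * (g a - g b)) :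
    trace (hA.cfc f * X * hA.cfc g * X) ≤ trace (hA.cfc f * hA.cfc g * X ^ 2) := by
  set U : Matrix (Fin n) (Fin n) ℂ := (hA.eigenvectorUnitary : Matrix (Fin n) (Fin n) ℂ) with hU
  have hU1 : star U * U = 1 := Unitary.star_mul_self_of_mem hA.eigenvectorUnitary.2
  have hU2 : U * star U = 1 := Unitary.mul_star_self_of_mem hA.eigenvectorUnitary.2
  have c1 : ∀ M : Matrix (Fin n) (Fin n) ℂ, star U * (U * M) = M := fun M => by
    rw [← Matrix.mul_assoc, hU1, Matrix.one_mul]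
  have c2 : ∀ M : Matrix (Fin n) (Fin n) ℂ, U * (star U * M) = M := fun M => by
    rw [← Matrix.mul_assoc, hU2, Matrix.one_mul]
  set Y : Matrix (Fin n) (Fin n) ℂ := star U * X * U with hY
  have hYherm : Yᴴ = Y := by
    simp [hY, conjTranspose_mul, hX.eq, Matrix.mul_assoc, Matrix.star_eq_conjTranspose]
  have hconj : ∀ i j, Y j i = (starRingEnd ℂ) (Y i j) := fun i j => by
    conv_lhs => rw [← hYherm]
    simp [conjTranspose_apply]
  set a : Fin n → ℂ := fun i => (f (hA.eigenvalues i) : ℂ) with ha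
  set b : Fin n → ℂ := fun i => (g (hA.eigenvalues i) : ℂ) with hb
  have hcfc : ∀ h : ℝ → ℝ, hA.cfc h
      = U * diagonal (fun i => (h (hA.eigenvalues i) : ℂ)) * star U := fun h => rfl
  -- reduce traces to diagonal form
  have h1 : trace (hA.cfc f * X * hA.cfc g * X)
      = trace (diagonal a * Y * diagonal b * Y) := by
    rw [hcfc f, hcfc g]
    rw [show (U * diagonal a * star U) * X * (U * diagonal b * star U) * X
        = U * (diagonal a * Y * diagonal b * (star U * X)) by
      simp [hY, Matrix.mul_assoc, c1, c2]]
    rw [Matrix.trace_mul_comm]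
    congr 1
    simp [hY, Matrix.mul_assoc]
  have h2 : trace (hA.cfc f * hA.cfc g * X ^ 2)
      = trace (diagonal a * diagonal b * (Y * Y)) := by
    rw [hcfc f, hcfc g, pow_two]
    rw [show (U * diagonal a * star U) * (U * diagonal b * star U) * (X * X)
        = U * (diagonal a * diagonal b * (star U * (X * X))) by
      simp [Matrix.mul_assoc, c1, c2,
        show ∀ M : Matrix (Fin n) (Fin n) ℂ, diagonal a * (diagonal b * M)
          = diagonal (fun i => a i * b i) * M from fun M => by
            rw [← Matrix.mul_assoc, Matrix.diagonal_mul_diagonal]]]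
    rw [Matrix.trace_mul_comm]
    congr 1
    simp [hY, Matrix.mul_assoc, c2]
  -- sum forms
  have s1 : trace (diagonal a * Y * diagonal b * Y)
      = ∑ i, ∑ j, a i * Y i j * b j * Y j i := by
    simp only [Matrix.trace, Matrix.diag, Matrix.mul_apply, Matrix.diagonal_apply,
      ite_mul, mul_ite, mul_zero, zero_mul, Finset.sum_ite_eq, Finset.sum_ite_eq',
      Finset.mem_univ, if_true]
  have s2 : trace (diagonal a * diagonal b * (Y * Y))
      = ∑ i, ∑ j, a i * b i * (Y i j * Y j i) := by
    rw [Matrix.diagonal_mul_diagonal]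
    simp only [Matrix.trace, Matrix.diag, Matrix.diagonal_mul]
    simp only [Matrix.mul_apply, Finset.mul_sum, mul_assoc]
  -- real forms
  set N : Fin n → Fin n → ℝ := fun i j => Complex.normSq (Y i j) with hN
  have hNsymm : ∀ i j, N j i = N i j := fun i j => by
    simp [hN, hconj i j]
  have hNnn : ∀ i j, 0 ≤ N i j := fun i j => Complex.normSq_nonneg _
  have term : ∀ (i j : Fin n), Y i j * Y j i = (N i j : ℂ) := fun i j => by
    rw [hconj i j, Complex.mul_conj, hN]
  have e1 : trace (hA.cfc f * X * hA.cfc g * X)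
      = ((∑ i, ∑ j, f (hA.eigenvalues i) * g (hA.eigenvalues j) * N i j : ℝ) : ℂ) := by
    rw [h1, s1]
    push_cast
    refine Finset.sum_congr rfl fun i _ => Finset.sum_congr rfl fun j _ => ?_
    rw [show a i * Y i j * b j * Y j i = a i * b j * (Y i j * Y j i) by ring, term i j]
  have e2 : trace (hA.cfc f * hA.cfc g * X ^ 2)
      = ((∑ i, ∑ j, f (hA.eigenvalues i) * g (hA.eigenvalues i) * N i j : ℝ) : ℂ) := by
    rw [h2, s2]
    push_cast
    refine Finset.sum_congr rfl fun i _ => Finset.sum_congr rfl fun j _ => ?_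
    rw [term i j]
  rw [e1, e2, Complex.real_le_real, ← sub_nonneg, ← Finset.sum_sub_distrib]
  simp_rw [← Finset.sum_sub_distrib]
  set T : ℝ := ∑ i, ∑ j, (f (hA.eigenvalues i) * g (hA.eigenvalues i) * N i j
      - f (hA.eigenvalues i) * g (hA.eigenvalues j) * N i j) with hT
  have key : 0 ≤ T + T := by
    have hswap : T = ∑ i, ∑ j, (f (hA.eigenvalues j) * g (hA.eigenvalues j) * N i j
        - f (hA.eigenvalues j) * g (hA.eigenvalues i) * N i j) := by
      rw [hT, Finset.sum_comm]
      exact Finset.sum_congr rfl fun i _ => Finset.sum_congr rfl fun j _ => by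
        rw [hNsymm i j]
    calc (0:ℝ) ≤ ∑ i, ∑ j, (f (hA.eigenvalues i) - f (hA.eigenvalues j))
          * (g (hA.eigenvalues i) - g (hA.eigenvalues j)) * N i j := by
          refine Finset.sum_nonneg fun i _ => Finset.sum_nonneg fun j _ => ?_
          exact mul_nonneg (hfg _ (hspec i) _ (hspec j)) (hNnn i j)
      _ = T + T := by
          nth_rewrite 1 [hT]
          nth_rewrite 1 [hswap]
          rw [← Finset.sum_add_distrib]
          refine Finset.sum_congr rfl fun i _ => ?_
          rw [← Finset.sum_add_distrib]
          exact Finset.sum_congr rfl fun j _ => by ring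
  linarith
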